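/- Let t₀ ~ N(μ, σ²) with σ > 0 and let T be uniformly distributed on [c, d) with 0 ≤ c < d, independent of t₀. Define x(t) = a·1_{t₀ ≤ t < t₀ + T}. Then E[x(t)] = a·[1 − Q((t−μ)/σ) + (σ/(d−c))·(c'Q(c') − d'Q(d') + φ(d') − φ(c') + d' − c')], where c' = (t−c−μ)/σ, d' = (t−d−μ)/σ, Q(x) = 1 − Φ(x), and φ is the standard normal density. -/

import Mathlib

open MeasureTheory ProbabilityTheory Real Set

/-- The Gaussian Q-function `Q(x) = (1/√(2π)) ∫_x^∞ e^{−u²/2} du`. -/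
noncomputable def gaussQ (x : ℝ) : ℝ :=
  (Real.sqrt (2 * Real.pi))⁻¹ * ∫ u in Set.Ioi x, Real.exp (-u ^ 2 / 2)

/-- The standard normal density `φ`. -/
noncomputable def stdNormalPDF (x : ℝ) : ℝ :=
  (Real.sqrt (2 * Real.pi))⁻¹ * Real.exp (-x ^ 2 / 2)

lemma integrable_expsq : Integrable (fun x : ℝ => Real.exp (-x ^ 2 / 2)) := by
  have h : Integrable (fun x : ℝ => Real.exp (-(1/2) * x ^ 2)) :=
    integrable_exp_neg_mul_sq (by norm_num)
  have he : (fun x : ℝ => Real.exp (-x ^ 2 / 2)) = fun x => Real.exp (-(1/2) * x ^ 2) := by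
    funext x; ring_nf
  rw [he]; exact h

lemma integrable_phi : Integrable stdNormalPDF :=
  integrable_expsq.const_mul (Real.sqrt (2 * Real.pi))⁻¹

lemma integrable_zphi : Integrable (fun z : ℝ => z * stdNormalPDF z) := by
  have h : Integrable (fun x : ℝ => x * Real.exp (-(1/2) * x ^ 2)) :=
    integrable_mul_exp_neg_mul_sq (by norm_num)
  have he : ∀ x : ℝ, -(1/2) * x ^ 2 = -x ^ 2 / 2 := fun x => by ring
  have := h.const_mul (Real.sqrt (2 * Real.pi))⁻¹
  simp only [he] at this
  refine this.congr ?_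
  filter_upwards with x
  simp [stdNormalPDF]; ring

lemma gaussQ_Ioc {p q : ℝ} (h : p ≤ q) :
    ∫ z in Set.Ioc p q, stdNormalPDF z = gaussQ p - gaussQ q := by
  have hsplit : (∫ u in Set.Ioc p q, Real.exp (-u ^ 2 / 2))
      + (∫ u in Set.Ioi q, Real.exp (-u ^ 2 / 2))
      = ∫ u in Set.Ioi p, Real.exp (-u ^ 2 / 2) := by
    rw [← setIntegral_union (Set.Ioc_disjoint_Ioi le_rfl) measurableSet_Ioi
      integrable_expsq.integrableOn integrable_expsq.integrableOn,
      Set.Ioc_union_Ioi_eq_Ioi h]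
  have : ∫ z in Set.Ioc p q, stdNormalPDF z
      = (Real.sqrt (2 * Real.pi))⁻¹ * ∫ u in Set.Ioc p q, Real.exp (-u ^ 2 / 2) := by
    simp [stdNormalPDF, integral_const_mul]
  rw [this, gaussQ, gaussQ, ← hsplit]
  ring

lemma zphi_Ioc {p q : ℝ} (h : p ≤ q) :
    ∫ z in Set.Ioc p q, z * stdNormalPDF z = stdNormalPDF p - stdNormalPDF q := by
  rw [← intervalIntegral.integral_of_le h]
  have hd : ∀ z : ℝ, HasDerivAt (fun x => -stdNormalPDF x) (z * stdNormalPDF z) z := by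
    intro z
    have h1 : HasDerivAt (fun x : ℝ => -x ^ 2 / 2) (-z) z := by
      have := ((hasDerivAt_pow 2 z).neg.div_const 2)
      simpa using this.congr_deriv (by ring)
    have h2 := (h1.exp).const_mul (Real.sqrt (2 * Real.pi))⁻¹
    have h3 : HasDerivAt (fun x => -stdNormalPDF x)
        (-((Real.sqrt (2 * Real.pi))⁻¹ * (Real.exp (-z ^ 2 / 2) * -z))) z := h2.neg
    convert h3 using 1
    simp [stdNormalPDF]; ring
  rw [intervalIntegral.integral_eq_sub_of_hasDerivAt (fun z _ => hd z)
    integrable_zphi.intervalIntegrable]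
  ring

/-- closed form of the expected uncoordinated charging demand when
`t₀ ~ N(μ, σ²)` and `T` is uniform on `[c, d)`, independent of `t₀`. -/
theorem phev_expected_demand_gaussian_uniform {Ω : Type*} [MeasureSpace Ω]
    [IsProbabilityMeasure (ℙ : Measure Ω)]
    (t₀ T : Ω → ℝ) (ht₀ : Measurable t₀) (hT : Measurable T)
    (hindep : IndepFun t₀ T)
    (μ σ : ℝ) (hσ : 0 < σ)
    (hgauss : Measure.map t₀ ℙ = gaussianReal μ ⟨σ ^ 2, sq_nonneg σ⟩)
    (c d : ℝ) (hc : 0 ≤ c) (hcd : c < d)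
    (hunif : Measure.map T ℙ
      = (ENNReal.ofReal (d - c))⁻¹ • volume.restrict (Set.Ico c d))
    (a : ℝ) (ha : 0 < a) (t : ℝ) :
    (∫ ω, (if t₀ ω ≤ t ∧ t < t₀ ω + T ω then a else 0) ∂ℙ)
      = a * (1 - gaussQ ((t - μ) / σ)
          + σ / (d - c) *
            (((t - c - μ) / σ) * gaussQ ((t - c - μ) / σ)
              - ((t - d - μ) / σ) * gaussQ ((t - d - μ) / σ)
              + stdNormalPDF ((t - d - μ) / σ) - stdNormalPDF ((t - c - μ) / σ)
              + (t - d - μ) / σ - (t - c - μ) / σ)) := by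
  have hσne : σ ≠ 0 := hσ.ne'
  have hdc : (0:ℝ) < d - c := sub_pos.mpr hcd
  set v : NNReal := ⟨σ ^ 2, sq_nonneg σ⟩ with hvdef
  have hv : v ≠ 0 := by
    intro h
    have h2 : σ ^ 2 = 0 := congrArg NNReal.toReal h
    exact hσne (by nlinarith)
  set t' : ℝ := (t - μ) / σ with ht'
  set c' : ℝ := (t - c - μ) / σ with hc'
  set d' : ℝ := (t - d - μ) / σ with hd'
  have hd'c' : d' ≤ c' := by
    rw [hd', hc', div_le_div_iff_of_pos_right hσ]
    linarith
  have hc't' : c' ≤ t' := by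
    rw [hc', ht', div_le_div_iff_of_pos_right hσ]
    linarith
  -- the survival-type function
  set g : ℝ → ℝ := fun s => if s ≤ t then max 0 ((d - max c (t - s)) / (d - c)) else 0 with hg
  have hgnn : ∀ s, 0 ≤ g s := by
    intro s
    rw [hg]
    by_cases hs : s ≤ t
    · simp only [if_pos hs]; exact le_max_left _ _
    · simp only [if_neg hs]; exact le_refl 0
  have hgb : ∀ s, ‖g s‖ ≤ 1 := by
    intro s
    rw [Real.norm_eq_abs, abs_of_nonneg (hgnn s), hg]
    by_cases hs : s ≤ t
    · simp only [if_pos hs]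
      apply max_le zero_le_one
      rw [div_le_one hdc]
      have h1 : c ≤ max c (t - s) := le_max_left _ _
      linarith
    · simp only [if_neg hs]; exact zero_le_one
  have hgm : Measurable g := by
    have hco : Continuous (fun s : ℝ => max 0 ((d - max c (t - s)) / (d - c))) := by
      fun_prop
    exact Measurable.ite measurableSet_Iic hco.measurable measurable_const
  -- the event set
  set S : Set (ℝ × ℝ) := {p | p.1 ≤ t ∧ t < p.1 + p.2} with hSdef
  have hSm : MeasurableSet S :=
    (measurableSet_le measurable_fst measurable_const).inter
      (measurableSet_lt measurable_const (measurable_fst.add measurable_snd))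
  -- Step 1: LHS as integral over joint (product) law
  have h1 : (∫ ω, (if t₀ ω ≤ t ∧ t < t₀ ω + T ω then a else 0) ∂ℙ)
      = ∫ p, S.indicator (fun _ => a) p
          ∂((gaussianReal μ v).prod
            ((ENNReal.ofReal (d - c))⁻¹ • volume.restrict (Set.Ico c d))) := by
    rw [← hgauss, ← hunif,
      ← (indepFun_iff_map_prod_eq_prod_map_map ht₀.aemeasurable hT.aemeasurable).mp hindep,
      integral_map (ht₀.prodMk hT).aemeasurable
        (measurable_const.indicator hSm).aestronglyMeasurable]
    congr 1
    funext ω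
    rw [Set.indicator_apply]
    simp only [hSdef, Set.mem_setOf_eq]
  -- Step 2: fiberwise measure of the section
  have h2 : ∀ s : ℝ, ((ENNReal.ofReal (d - c))⁻¹ • volume.restrict (Set.Ico c d))
      (Prod.mk s ⁻¹' S) = ENNReal.ofReal (g s) := by
    intro s
    by_cases hs : s ≤ t
    · have hpre : Prod.mk s ⁻¹' S = Set.Ioi (t - s) := by
        ext u
        simp only [hSdef, Set.mem_preimage, Set.mem_setOf_eq, Set.mem_Ioi]
        constructor
        · rintro ⟨_, h⟩; linarith
        · intro h; exact ⟨hs, by linarith⟩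
      have hofmax : ENNReal.ofReal (g s) = ENNReal.ofReal ((d - max c (t - s)) / (d - c)) := by
        rw [hg]
        simp only [if_pos hs]
        rcases le_total ((d - max c (t - s)) / (d - c)) 0 with h | h
        · rw [max_eq_left h, ENNReal.ofReal_zero, ENNReal.ofReal_of_nonpos h]
        · rw [max_eq_right h]
      rw [hpre, hofmax, Measure.smul_apply, Measure.restrict_apply measurableSet_Ioi,
        smul_eq_mul]
      rcases lt_or_ge (t - s) c with hx | hx
      · have hint : Set.Ioi (t - s) ∩ Set.Ico c d = Set.Ico c d := by
          apply Set.inter_eq_right.mpr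
          intro u hu
          exact lt_of_lt_of_le hx hu.1
        rw [hint, Real.volume_Ico, max_eq_left hx.le, div_self hdc.ne', ENNReal.ofReal_one]
        exact ENNReal.inv_mul_cancel (by simp [hcd]) ENNReal.ofReal_ne_top
      · have hint : Set.Ioi (t - s) ∩ Set.Ico c d = Set.Ioo (t - s) d := by
          ext u
          simp only [Set.mem_inter_iff, Set.mem_Ioi, Set.mem_Ico, Set.mem_Ioo]
          constructor
          · rintro ⟨h1, _, h3⟩; exact ⟨h1, h3⟩
          · rintro ⟨h1, h2⟩; exact ⟨h1, le_trans hx h1.le, h2⟩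
        rw [hint, Real.volume_Ioo, max_eq_right hx, ENNReal.ofReal_div_of_pos hdc,
          ENNReal.div_eq_inv_mul]
    · have hpre : Prod.mk s ⁻¹' S = (∅ : Set ℝ) := by
        ext u
        simp only [hSdef, Set.mem_preimage, Set.mem_setOf_eq, Set.mem_empty_iff_false,
          iff_false, not_and]
        intro h; exact absurd h hs
      rw [hpre]
      simp [hg, if_neg hs]
  -- integrability of g under the gaussian
  have hgint : Integrable g (gaussianReal μ v) :=
    (integrable_const (1:ℝ)).mono' hgm.aestronglyMeasurable (ae_of_all _ hgb)
  -- Step 3: the product measure of S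
  have h3 : ((gaussianReal μ v).prod
        ((ENNReal.ofReal (d - c))⁻¹ • volume.restrict (Set.Ico c d))) S
      = ENNReal.ofReal (∫ s, g s ∂(gaussianReal μ v)) := by
    rw [Measure.prod_apply hSm]
    simp_rw [h2]
    rw [← ofReal_integral_eq_lintegral_ofReal hgint (ae_of_all _ hgnn)]
  -- Step 4: density form
  have h4 : ∫ s, g s ∂(gaussianReal μ v) = ∫ s, gaussianPDFReal μ v s * g s := by
    rw [gaussianReal_of_var_ne_zero μ hv]
    rw [show gaussianPDF μ v = fun x => ((gaussianPDFReal μ v x).toNNReal : ENNReal) from rfl]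
    rw [integral_withDensity_eq_integral_smul (measurable_gaussianPDFReal μ v).real_toNNReal g]
    congr 1
    funext s
    rw [NNReal.smul_def, smul_eq_mul, Real.coe_toNNReal _ (gaussianPDFReal_nonneg μ v s)]
  -- Step 5: substitution to the standard normal
  have h5 : ∫ s, gaussianPDFReal μ v s * g s
      = ∫ z, stdNormalPDF z * g (μ + σ * z) := by
    have heq : ∀ s, gaussianPDFReal μ v s * g s
        = σ⁻¹ * (fun z => stdNormalPDF z * g (μ + σ * z)) ((s - μ) / σ) := by
      intro s
      have hss : μ + σ * ((s - μ) / σ) = s := by field_simp; ring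
      simp only [hss]
      rw [gaussianPDFReal, stdNormalPDF]
      have h1 : ((v : ℝ)) = σ ^ 2 := rfl
      rw [h1, show (2 * π * σ ^ 2) = (2 * π) * σ ^ 2 by ring,
        Real.sqrt_mul (by positivity) (σ ^ 2), Real.sqrt_sq hσ.le]
      have h2 : -((s - μ) / σ) ^ 2 / 2 = -(s - μ) ^ 2 / (2 * σ ^ 2) := by
        rw [div_pow]
        ring
      rw [h2, mul_inv]
      ring
    simp_rw [heq]
    rw [MeasureTheory.integral_const_mul]
    rw [integral_sub_right_eq_self (μ := volume)
      (fun y => (fun z => stdNormalPDF z * g (μ + σ * z)) (y / σ)) μ]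
    rw [Measure.integral_comp_div (fun z => stdNormalPDF z * g (μ + σ * z)) σ]
    rw [abs_of_pos hσ, smul_eq_mul, ← mul_assoc, inv_mul_cancel₀ hσne, one_mul]
  -- Step 6: pointwise piecewise decomposition
  have h6 : ∀ z : ℝ, stdNormalPDF z * g (μ + σ * z)
      = (Set.Ioc d' c').indicator
          (fun z => (σ / (d - c)) * ((z - d') * stdNormalPDF z)) z
        + (Set.Ioc c' t').indicator stdNormalPDF z := by
    intro z
    simp only [hg]
    rcases le_or_gt z d' with hz1 | hz1
    · -- z ≤ d' : both sides vanish
      have hxd : d ≤ t - (μ + σ * z) := by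
        rw [hd', le_div_iff₀ hσ] at hz1
        nlinarith
      have hle : μ + σ * z ≤ t := by nlinarith
      have hmax : max c (t - (μ + σ * z)) = t - (μ + σ * z) :=
        max_eq_right (by linarith)
      rw [if_pos hle, hmax,
        Set.indicator_of_notMem (by simp only [Set.mem_Ioc, not_and]; intro h; linarith),
        Set.indicator_of_notMem (by simp only [Set.mem_Ioc, not_and]; intro h; linarith)]
      have : (d - (t - (μ + σ * z))) / (d - c) ≤ 0 :=
        div_nonpos_of_nonpos_of_nonneg (by linarith) hdc.le
      rw [max_eq_left this]
      ring
    · rcases le_or_gt z c' with hz2 | hz2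
      · -- d' < z ≤ c'
        have hxd : t - (μ + σ * z) < d := by
          rw [hd', div_lt_iff₀ hσ] at hz1
          nlinarith
        have hxc : c ≤ t - (μ + σ * z) := by
          rw [hc', le_div_iff₀ hσ] at hz2
          nlinarith
        have hle : μ + σ * z ≤ t := by linarith
        have hmax : max c (t - (μ + σ * z)) = t - (μ + σ * z) := max_eq_right hxc
        rw [if_pos hle, hmax,
          Set.indicator_of_mem (Set.mem_Ioc.mpr ⟨hz1, hz2⟩),
          Set.indicator_of_notMem (by simp only [Set.mem_Ioc, not_and]; intro h; linarith)]
        have hnn : 0 ≤ (d - (t - (μ + σ * z))) / (d - c) :=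
          div_nonneg (by linarith) hdc.le
        rw [max_eq_right hnn, hd']
        field_simp
        ring
      · rcases le_or_gt z t' with hz3 | hz3
        · -- c' < z ≤ t'
          have hxc : t - (μ + σ * z) < c := by
            rw [hc', div_lt_iff₀ hσ] at hz2
            nlinarith
          have hx0 : 0 ≤ t - (μ + σ * z) := by
            rw [ht', le_div_iff₀ hσ] at hz3
            nlinarith
          have hle : μ + σ * z ≤ t := by linarith
          have hmax : max c (t - (μ + σ * z)) = c := max_eq_left hxc.le
          rw [if_pos hle, hmax, div_self hdc.ne', max_eq_right zero_le_one,
            Set.indicator_of_notMem (by simp only [Set.mem_Ioc, not_and]; intro h; linarith),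
            Set.indicator_of_mem (Set.mem_Ioc.mpr ⟨hz2, hz3⟩)]
          ring
        · -- t' < z
          have hgt : ¬ (μ + σ * z ≤ t) := by
            rw [ht', div_lt_iff₀ hσ] at hz3
            intro h
            nlinarith
          rw [if_neg hgt,
            Set.indicator_of_notMem (by simp only [Set.mem_Ioc, not_and]; intro h; linarith),
            Set.indicator_of_notMem (by simp only [Set.mem_Ioc, not_and]; intro h; linarith)]
          ring
  -- integrability of the first indicator integrand
  have hint1 : Integrable (fun z => (σ / (d - c)) * ((z - d') * stdNormalPDF z)) := by
    have h := (integrable_zphi.sub (integrable_phi.const_mul d')).const_mul (σ / (d - c))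
    refine h.congr ?_
    filter_upwards with z
    simp only [Pi.sub_apply]
    ring
  -- Step 7: evaluation of the standard-normal integral
  have h7 : ∫ z, stdNormalPDF z * g (μ + σ * z)
      = (σ / (d - c)) * ((stdNormalPDF d' - stdNormalPDF c') - d' * (gaussQ d' - gaussQ c'))
        + (gaussQ c' - gaussQ t') := by
    simp only [h6]
    rw [integral_add (hint1.indicator measurableSet_Ioc)
        (integrable_phi.indicator measurableSet_Ioc),
      integral_indicator measurableSet_Ioc, integral_indicator measurableSet_Ioc,
      MeasureTheory.integral_const_mul, gaussQ_Ioc hc't']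
    congr 2
    have hsub : ∀ z : ℝ, (z - d') * stdNormalPDF z
        = z * stdNormalPDF z - d' * stdNormalPDF z := fun z => by ring
    simp only [hsub]
    rw [integral_sub integrable_zphi.integrableOn (integrable_phi.const_mul d').integrableOn,
      MeasureTheory.integral_const_mul, zphi_Ioc hd'c', gaussQ_Ioc hd'c']
  -- Final assembly
  rw [h1, integral_indicator_const a hSm, measureReal_def, h3,
    ENNReal.toReal_ofReal (integral_nonneg hgnn), h4, h5, h7, smul_eq_mul,
    ht', hc', hd']
  have hdcne : d - c ≠ 0 := hdc.ne'
  field_simp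
  ring
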